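/- Let f(t,s) = e^{-γ̄(t-s)} 1_{{0≤s≤t≤T}} be the kernel on [0,∞)² with γ = λ - iω, λ > 0, and let h(t,s) = conj(f(s,t)) = e^{-γ(s-t)} 1_{{0≤t≤s≤T}}. Then the (1,0)-contraction (f ⊗_{1,0} h)(t,s) = ∫₀^∞ f(t,u) h(u,s) du satisfies ‖f ⊗_{1,0} h‖²_{L²} ≤ C(λ) · T for an explicit constant C(λ) depending only on λ, so that for ψ_T = T^{-1/2} f, ‖ψ_T ⊗_{1,0} h_T‖² ≤ C(λ)/T. -/

import Mathlib

open Complex MeasureTheory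

open Real Set in
private lemma integrable_exp_neg_mul_abs' (c : ℝ) (hc : 0 < c) :
    Integrable (fun x : ℝ => rexp (-c * |x|)) := by
  have hIoi : IntegrableOn (fun x : ℝ => rexp (-c * |x|)) (Ioi 0) :=
    (exp_neg_integrableOn_Ioi 0 hc).congr_fun
      (fun x hx => by rw [abs_of_pos hx]) measurableSet_Ioi
  have hIic : IntegrableOn (fun x : ℝ => rexp (-c * |x|)) (Iic 0) := by
    rw [IntegrableOn, ← Measure.map_neg_eq_self (volume : Measure ℝ)]
    have m : MeasurableEmbedding fun x : ℝ => -x :=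
      (Homeomorph.neg ℝ).measurableEmbedding
    rw [Measure.restrict_map m.measurable measurableSet_Iic]
    rw [m.integrable_map_iff]
    simp_rw [Function.comp_def, abs_neg, neg_preimage, neg_Iic, neg_zero]
    exact Iff.mpr integrableOn_Ici_iff_integrableOn_Ioi hIoi
  have : Iic (0:ℝ) ∪ Ioi 0 = univ := Iic_union_Ioi
  rw [← integrableOn_univ, ← this]
  exact hIic.union hIoi

/-- With `γ = λ - iω`, `λ > 0`, `f(t,s) = e^{-γ̄(t-s)} 1_{0≤s≤t≤T}` and
`h(t,s) = conj (f(s,t)) = e^{-γ(s-t)} 1_{0≤t≤s≤T}`, the `(1,0)`-contraction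
`(f ⊗_{1,0} h)(t,s) = ∫₀^∞ f(t,u) h(u,s) du` satisfies
`‖f ⊗_{1,0} h‖²_{L²} ≤ C(λ) · T` for a constant `C(λ)` depending only on `λ`;
consequently `‖ψ_T ⊗_{1,0} h_T‖² ≤ C(λ)/T` for `ψ_T = T^{-1/2} f`, `h_T = T^{-1/2} h`. -/
theorem contraction_l2_bound (lam : ℝ) (hlam : 0 < lam) :
    ∃ C : ℝ, ∀ (om T : ℝ), 0 < T →
      ∀ (γ : ℂ) (f h : ℝ → ℝ → ℂ),
        γ = (lam : ℂ) - Complex.I * om →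
        (∀ t s, f t s = if 0 ≤ s ∧ s ≤ t ∧ t ≤ T then
            Complex.exp (-(starRingEnd ℂ) γ * ((t : ℂ) - s)) else 0) →
        (∀ t s, h t s = (starRingEnd ℂ) (f s t)) →
        (∫ t : ℝ, ∫ s : ℝ, ‖∫ u in Set.Ioi (0:ℝ), f t u * h u s‖ ^ 2) ≤ C * T ∧
        (∫ t : ℝ, ∫ s : ℝ,
            ‖∫ u in Set.Ioi (0:ℝ),
                ((Real.sqrt T)⁻¹ * f t u) * ((Real.sqrt T)⁻¹ * h u s)‖ ^ 2) ≤ C / T := by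
  classical
  set J : ℝ := ∫ x in Set.Ioi (0:ℝ), Real.exp (-(2*lam) * x) with hJdef
  set V : ℝ := ∫ x : ℝ, Real.exp (-(2*lam) * |x|) with hVdef
  have h2lam : (0:ℝ) < 2*lam := by linarith
  have hJ0 : 0 ≤ J := integral_nonneg fun x => (Real.exp_pos _).le
  have hV0 : 0 ≤ V := integral_nonneg fun x => (Real.exp_pos _).le
  refine ⟨J^2 * V, ?_⟩
  intro om T hT γ f h hγ hf hh
  -- norm of the exponential factors
  have hnorm : ∀ a b : ℝ, ‖Complex.exp (-(starRingEnd ℂ) γ * ((a:ℂ) - b))‖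
      = Real.exp (-lam * (a - b)) := by
    intro a b
    rw [Complex.norm_exp]
    congr 1
    subst hγ
    simp [Complex.mul_re]
  -- the key pointwise bound on the inner integral
  have key : ∀ t s : ℝ, ‖∫ u in Set.Ioi (0:ℝ), f t u * h u s‖
      ≤ Real.exp (-lam * |t - s|) * J := by
    intro t s
    set m : ℝ := min t s with hm
    set D : ℝ → ℝ := (Set.Icc (0:ℝ) m).indicator
      (fun u => Real.exp (-(2*lam) * (m - u))) with hD
    have hDnonneg : ∀ u, 0 ≤ D u := fun u =>
      Set.indicator_nonneg (fun x _ => (Real.exp_pos _).le) u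
    have hDint : Integrable D := by
      refine (ContinuousOn.integrableOn_compact isCompact_Icc ?_).integrable_indicator
        measurableSet_Icc
      exact (Real.continuous_exp.comp (by continuity)).continuousOn
    have hGint : Integrable (fun u => Real.exp (-lam * |t - s|) * D u)
        (volume.restrict (Set.Ioi (0:ℝ))) :=
      ((hDint.const_mul _).restrict)
    have hbound : ∀ u, ‖f t u * h u s‖ ≤ Real.exp (-lam * |t - s|) * D u := by
      intro u
      rw [hh, hf, hf]
      by_cases h1 : 0 ≤ u ∧ u ≤ t ∧ t ≤ T
      · by_cases h2 : 0 ≤ u ∧ u ≤ s ∧ s ≤ T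
        · rw [if_pos h1, if_pos h2]
          have humem : u ∈ Set.Icc (0:ℝ) m :=
            ⟨h1.1, le_min h1.2.1 h2.2.1⟩
          have hDu : D u = Real.exp (-(2*lam) * (m - u)) :=
            Set.indicator_of_mem humem _
          rw [norm_mul, hnorm, RCLike.norm_conj, hnorm, hDu,
            ← Real.exp_add, ← Real.exp_add]
          apply le_of_eq
          congr 1
          rcases le_total t s with hts | hts
          · rw [_root_.abs_of_nonpos (by linarith), hm, min_eq_left hts]; ring
          · rw [_root_.abs_of_nonneg (by linarith), hm, min_eq_right hts]; ring
        · rw [if_neg h2, map_zero, mul_zero, norm_zero]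
          exact mul_nonneg (Real.exp_pos _).le (hDnonneg u)
      · rw [if_neg h1, zero_mul, norm_zero]
        exact mul_nonneg (Real.exp_pos _).le (hDnonneg u)
    have step1 : ‖∫ u in Set.Ioi (0:ℝ), f t u * h u s‖
        ≤ ∫ u in Set.Ioi (0:ℝ), Real.exp (-lam * |t - s|) * D u :=
      norm_integral_le_of_norm_le hGint (Filter.Eventually.of_forall fun u => hbound u)
    have step2 : (∫ u in Set.Ioi (0:ℝ), Real.exp (-lam * |t - s|) * D u)
        = Real.exp (-lam * |t - s|) * ∫ u in Set.Ioi (0:ℝ), D u :=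
      integral_const_mul _ _
    have step3 : (∫ u in Set.Ioi (0:ℝ), D u) ≤ J := by
      have hle : (∫ u in Set.Ioi (0:ℝ), D u) ≤ ∫ u, D u :=
        setIntegral_le_integral hDint (Filter.Eventually.of_forall hDnonneg)
      refine hle.trans ?_
      rw [integral_indicator measurableSet_Icc]
      rcases le_or_gt 0 m with hm0 | hm0
      · rw [integral_Icc_eq_integral_Ioc, ← intervalIntegral.integral_of_le hm0]
        have := intervalIntegral.integral_comp_sub_left
          (fun x => Real.exp (-(2*lam) * x)) m (a := 0) (b := m)
        rw [this, sub_self, sub_zero, intervalIntegral.integral_of_le hm0]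
        refine setIntegral_mono_set (exp_neg_integrableOn_Ioi 0 h2lam)
          (Filter.Eventually.of_forall fun x => (Real.exp_pos _).le) ?_
        exact Filter.Eventually.of_forall fun x hx => Set.Ioc_subset_Ioi_self hx
      · rw [Set.Icc_eq_empty (not_le.mpr hm0)]
        simpa using hJ0
    calc ‖∫ u in Set.Ioi (0:ℝ), f t u * h u s‖
        ≤ Real.exp (-lam * |t - s|) * ∫ u in Set.Ioi (0:ℝ), D u := by
          rw [← step2]; exact step1
      _ ≤ Real.exp (-lam * |t - s|) * J :=
          mul_le_mul_of_nonneg_left step3 (Real.exp_pos _).le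
  -- squared bound
  have keysq : ∀ t s : ℝ, ‖∫ u in Set.Ioi (0:ℝ), f t u * h u s‖ ^ 2
      ≤ J^2 * Real.exp (-(2*lam) * |t - s|) := by
    intro t s
    have h1 : ‖∫ u in Set.Ioi (0:ℝ), f t u * h u s‖ ^ 2
        ≤ (Real.exp (-lam * |t - s|) * J) ^ 2 := by
      apply pow_le_pow_left₀ (norm_nonneg _) (key t s)
    refine h1.trans_eq ?_
    rw [mul_pow, ← Real.exp_nat_mul]
    ring_nf
  -- vanishing outside [0, T] in the t variable
  have hvanish : ∀ t : ℝ, t ∉ Set.Icc (0:ℝ) T →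
      ∀ s : ℝ, (∫ u in Set.Ioi (0:ℝ), f t u * h u s) = 0 := by
    intro t ht s
    have : ∀ u : ℝ, f t u * h u s = 0 := by
      intro u
      rw [hf, if_neg, zero_mul]
      rintro ⟨hu0, hut, htT⟩
      exact ht ⟨hu0.trans hut, htT⟩
    simp [this]
  -- the s-marginal
  have hpsi_nonneg : ∀ t : ℝ, 0 ≤ ∫ s : ℝ, ‖∫ u in Set.Ioi (0:ℝ), f t u * h u s‖ ^ 2 :=
    fun t => integral_nonneg fun s => by positivity
  have hexp_int : Integrable (fun x : ℝ => Real.exp (-(2*lam) * |x|)) :=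
    integrable_exp_neg_mul_abs' _ h2lam
  have hpsi_le : ∀ t : ℝ,
      (∫ s : ℝ, ‖∫ u in Set.Ioi (0:ℝ), f t u * h u s‖ ^ 2)
        ≤ Set.indicator (Set.Icc (0:ℝ) T) (fun _ => J^2 * V) t := by
    intro t
    by_cases ht : t ∈ Set.Icc (0:ℝ) T
    · rw [Set.indicator_of_mem ht]
      have hint : Integrable (fun s : ℝ => J^2 * Real.exp (-(2*lam) * |s - t|)) :=
        (hexp_int.comp_sub_right t).const_mul _
      calc (∫ s : ℝ, ‖∫ u in Set.Ioi (0:ℝ), f t u * h u s‖ ^ 2)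
          ≤ ∫ s : ℝ, J^2 * Real.exp (-(2*lam) * |s - t|) := by
            refine integral_mono_of_nonneg
              (Filter.Eventually.of_forall fun s => by positivity) hint
              (Filter.Eventually.of_forall fun s => ?_)
            dsimp only
            rw [abs_sub_comm s t]
            exact keysq t s
        _ = J^2 * ∫ s : ℝ, Real.exp (-(2*lam) * |s - t|) := integral_const_mul _ _
        _ = J^2 * V := by
            rw [hVdef]
            congr 1
            exact integral_sub_right_eq_self (fun x : ℝ => Real.exp (-(2*lam) * |x|)) t
    · rw [Set.indicator_of_notMem ht]
      have : ∀ s : ℝ, ‖∫ u in Set.Ioi (0:ℝ), f t u * h u s‖ ^ 2 = 0 := by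
        intro s
        rw [hvanish t ht s, norm_zero]
        norm_num
      have h0 : (∫ s : ℝ, ‖∫ u in Set.Ioi (0:ℝ), f t u * h u s‖ ^ 2) = 0 := by
        simp only [this]
        exact integral_zero _ _
      rw [h0]
  -- the first bound
  have main1 : (∫ t : ℝ, ∫ s : ℝ, ‖∫ u in Set.Ioi (0:ℝ), f t u * h u s‖ ^ 2)
      ≤ J^2 * V * T := by
    have hindint : Integrable (Set.indicator (Set.Icc (0:ℝ) T) (fun _ => J^2 * V)) := by
      refine (IntegrableOn.integrable_indicator ?_ measurableSet_Icc)
      exact integrableOn_const measure_Icc_lt_top.ne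
    calc (∫ t : ℝ, ∫ s : ℝ, ‖∫ u in Set.Ioi (0:ℝ), f t u * h u s‖ ^ 2)
        ≤ ∫ t : ℝ, Set.indicator (Set.Icc (0:ℝ) T) (fun _ => J^2 * V) t :=
          integral_mono_of_nonneg (Filter.Eventually.of_forall hpsi_nonneg) hindint
            (Filter.Eventually.of_forall hpsi_le)
      _ = J^2 * V * T := by
          rw [integral_indicator_const _ measurableSet_Icc, measureReal_def, Real.volume_Icc, smul_eq_mul,
            ENNReal.toReal_ofReal (by linarith)]
          ring
  refine ⟨main1, ?_⟩
  -- the rescaled bound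
  have hsq : ((Real.sqrt T)⁻¹ : ℝ) * (Real.sqrt T)⁻¹ = T⁻¹ := by
    rw [← mul_inv, Real.mul_self_sqrt hT.le]
  have hinner : ∀ t s : ℝ,
      (∫ u in Set.Ioi (0:ℝ), ((Real.sqrt T)⁻¹ * f t u) * ((Real.sqrt T)⁻¹ * h u s))
        = ((T⁻¹ : ℝ) : ℂ) * ∫ u in Set.Ioi (0:ℝ), f t u * h u s := by
    intro t s
    rw [← integral_const_mul]
    congr 1
    funext u
    rw [show ((T⁻¹ : ℝ) : ℂ) = (((Real.sqrt T)⁻¹ : ℝ) : ℂ) * (((Real.sqrt T)⁻¹ : ℝ) : ℂ) by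
      rw [← Complex.ofReal_mul, hsq]]
    ring
  have hnormsq : ∀ t s : ℝ,
      ‖∫ u in Set.Ioi (0:ℝ), ((Real.sqrt T)⁻¹ * f t u) * ((Real.sqrt T)⁻¹ * h u s)‖ ^ 2
        = (T⁻¹)^2 * ‖∫ u in Set.Ioi (0:ℝ), f t u * h u s‖ ^ 2 := by
    intro t s
    rw [hinner t s, norm_mul, Complex.norm_real, Real.norm_eq_abs,
      _root_.abs_of_nonneg (by positivity), mul_pow]
  have hLHS2 : (∫ t : ℝ, ∫ s : ℝ,
      ‖∫ u in Set.Ioi (0:ℝ), ((Real.sqrt T)⁻¹ * f t u) * ((Real.sqrt T)⁻¹ * h u s)‖ ^ 2)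
      = (T⁻¹)^2 * ∫ t : ℝ, ∫ s : ℝ, ‖∫ u in Set.Ioi (0:ℝ), f t u * h u s‖ ^ 2 := by
    rw [← integral_const_mul]
    congr 1
    funext t
    rw [← integral_const_mul]
    congr 1
    funext s
    exact hnormsq t s
  rw [hLHS2]
  calc (T⁻¹)^2 * ∫ t : ℝ, ∫ s : ℝ, ‖∫ u in Set.Ioi (0:ℝ), f t u * h u s‖ ^ 2
      ≤ (T⁻¹)^2 * (J^2 * V * T) :=
        mul_le_mul_of_nonneg_left main1 (by positivity)
    _ = J^2 * V / T := by
        field_simp
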